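/- arXiv:1606.08668 — 7 statements merged into one kernel-verified Lean document; each statement's English description precedes it below -/
import Mathlib

section
/- Let S be a finite set of states with a total transition relation →, let C be a finite set of predicates on S, and let σ : ℕ → S be an infinite path such that every predicate f ∈ C holds at infinitely many indices of σ. Then there exists a finite path s′₀,...,s′ₙ (consecutive states related by →), an index p ≤ n−1 with s′ₙ = s′ₚ, all states s′ⱼ occurring in σ, and for each f ∈ C there is some q with p ≤ q ≤ n such that f holds at s′_q. -/
/-- From a fair infinite path one extracts a finite lasso path on
which every fairness predicate holds somewhere in the loop. -/
theorem fair_infinite_to_finite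
    {S : Type*} [Fintype S] (r : S → S → Prop)
    (htot : ∀ s, ∃ t, r s t)
    (C : Finset (S → Prop))
    (σ : ℕ → S) (hstep : ∀ i, r (σ i) (σ (i + 1)))
    (hfair : ∀ f ∈ C, {i : ℕ | f (σ i)}.Infinite) :
    ∃ (s' : ℕ → S) (n p : ℕ),
      (∀ i < n, r (s' i) (s' (i + 1))) ∧
      p < n ∧ s' n = s' p ∧
      (∀ j ≤ n, ∃ i, s' j = σ i) ∧
      (∀ f ∈ C, ∃ q, p ≤ q ∧ q ≤ n ∧ f (s' q)) := by
  classical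
  -- some state occurs infinitely often
  obtain ⟨s, hs⟩ := Finite.exists_infinite_fiber σ
  have hsI : (σ ⁻¹' {s}).Infinite := Set.infinite_coe_iff.mp hs
  obtain ⟨p, hp⟩ := hsI.nonempty
  -- for each f ∈ C choose an index ≥ p where f holds
  have hq : ∀ f ∈ C, ∃ q, p ≤ q ∧ f (σ q) := by
    intro f hf
    obtain ⟨q, hq1, hq2⟩ := (hfair f hf).exists_gt p
    exact ⟨q, le_of_lt hq2, hq1⟩
  let qf : (S → Prop) → ℕ := fun f => if h : f ∈ C then (hq f h).choose else 0
  let N := C.sup qf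
  obtain ⟨n, hn1, hn2⟩ := hsI.exists_gt (max p N)
  refine ⟨σ, n, p, fun i _ => hstep i, lt_of_le_of_lt (le_max_left p N) hn2,
    by simpa using hn1.trans hp.symm, fun j _ => ⟨j, rfl⟩, ?_⟩
  intro f hf
  refine ⟨qf f, ?_, ?_, ?_⟩
  · simpa [qf, hf] using (hq f hf).choose_spec.1
  · exact le_trans (le_trans (Finset.le_sup hf) (le_max_right p N)) hn2.le
  · simpa [qf, hf] using (hq f hf).choose_spec.2
end

section
/- Let S be a finite set of states with a total transition relation →, and for each state s let Next(s) = {s′ : s → s′}. Let Φ be a set of states and T a finite rooted tree labeled by states such that for each internal node labeled s, its children are labeled exactly by the elements of Next(s), and each leaf is labeled by a state that is either in Φ or equal to the label of some ancestor node on the branch from the root to this leaf. Then there exists a (possibly infinite) tree T′ labeled by states, with the same root label as T, such that for each internal node labeled s the children are labeled exactly by the elements of Next(s), all leaves are labeled by elements of Φ, and every label occurring in T′ occurs in T. -/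
/-- A (possibly infinite) rooted state-labeled tree with full `Next`-branching
at internal nodes.  A node is represented by the reversed path of labels from
the root to it (the head of the list is the node's own label, the last element
is the root's label). -/
structure StateTree (S : Type*) (r : S → S → Prop) (root : S) where
  /-- the set of nodes, each given by its reversed root-path -/
  mem : List S → Prop
  root_mem : mem [root]
  last_root : ∀ l, mem l → l.getLast? = some root
  tail_mem : ∀ a l, mem (a :: l) → l ≠ [] → mem l
  /-- at an internal node the children are labeled exactly by the
  `r`-successors of the node's label -/
  branching : ∀ a l, mem (a :: l) → (∃ b, mem (b :: a :: l)) →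
      ∀ b, (mem (b :: a :: l) ↔ r a b)

/-- Finite to possibly infinite trees.  If a finite
`Next`-branching tree has each leaf labeled either in `Φ` or by the label of an
ancestor, then there is a (possibly infinite) `Next`-branching tree with the
same root, all leaves labeled in `Φ`, and all labels among those of `T`. -/
theorem finite_to_possibly_infinite_trees
    {S : Type*} [Fintype S] (r : S → S → Prop)
    (htot : ∀ s, ∃ t, r s t)
    (Φ : Set S) (root : S) (T : StateTree S r root)
    (hfin : {l | T.mem l}.Finite)
    (hleaf : ∀ a l, T.mem (a :: l) → (∀ b, ¬ T.mem (b :: a :: l)) →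
      a ∈ Φ ∨ a ∈ l) :
    ∃ T' : StateTree S r root,
      (∀ a l, T'.mem (a :: l) → (∀ b, ¬ T'.mem (b :: a :: l)) → a ∈ Φ) ∧
      (∀ a, (∃ l, T'.mem (a :: l)) → ∃ l, T.mem (a :: l)) := by
  classical
  -- any nonempty suffix of a node of T is a node of T
  have hsuffix : ∀ (l₁ l₂ : List S), T.mem (l₁ ++ l₂) → l₂ ≠ [] → T.mem l₂ := by
    intro l₁
    induction l₁ with
    | nil => intro l₂ h _; simpa using h
    | cons c l₁ ih =>
      intro l₂ h hne
      exact ih l₂ (T.tail_mem c _ h (by simp [hne])) hne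
  -- labels occurring in T
  set Occ : S → Prop := fun a => ∃ l, T.mem (a :: l) with hOccdef
  have hOccroot : Occ root := ⟨[], T.root_mem⟩
  -- key lemma: successors of non-Φ occurring labels occur
  have key : ∀ a, Occ a → a ∉ Φ → ∀ b, r a b → Occ b := by
    intro a ha haΦ b hb
    have hex : ∃ n, ∃ l : List S, l.length = n ∧ T.mem (a :: l) := by
      obtain ⟨l, hl⟩ := ha; exact ⟨l.length, l, rfl, hl⟩
    obtain ⟨l, hlen, hl⟩ := Nat.find_spec hex
    by_cases hc : ∃ c, T.mem (c :: a :: l)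
    · exact ⟨a :: l, (T.branching a l hl hc b).2 hb⟩
    · push_neg at hc
      rcases hleaf a l hl hc with h | h
      · exact absurd h haΦ
      · obtain ⟨l₁, l₂, rfl⟩ := List.append_of_mem h
        have hm : T.mem (a :: l₂) :=
          hsuffix (a :: l₁) (a :: l₂) (by simpa using hl) (by simp)
        have hlt : l₂.length < Nat.find hex := by
          simp at hlen; omega
        exact absurd ⟨l₂, rfl, hm⟩ (Nat.find_min hex hlt)
  -- the new tree
  refine ⟨⟨fun L => L ≠ [] ∧ L.getLast? = some root ∧
      List.Chain' (fun x y => r y x) L ∧ (∀ x ∈ L, Occ x) ∧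
      (∀ x ∈ L.tail, x ∉ Φ), ?_, ?_, ?_, ?_⟩, ?_, ?_⟩
  · exact ⟨by simp, by simp, List.isChain_singleton _, by simpa using hOccroot, by simp⟩
  · exact fun l h => h.2.1
  · rintro a l ⟨-, hlast, hchain, hocc, hΦ⟩ hne
    refine ⟨hne, ?_, hchain.tail, fun x hx => hocc x (List.mem_cons_of_mem _ hx),
      fun x hx => hΦ x (List.mem_of_mem_tail hx)⟩
    cases l with
    | nil => exact absurd rfl hne
    | cons b l => rw [List.getLast?_cons_cons] at hlast; exact hlast
  · rintro a l ⟨hne, hlast, hchain, hocc, hΦ⟩ ⟨c, hc⟩ b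
    have haΦ : a ∉ Φ := hc.2.2.2.2 a (by simp)
    constructor
    · intro h
      exact (List.isChain_cons_cons.mp h.2.2.1).1
    · intro hb
      refine ⟨by simp, ?_, List.isChain_cons_cons.mpr ⟨hb, hchain⟩, ?_, ?_⟩
      · rw [List.getLast?_cons_cons]; exact hlast
      · intro x hx
        rcases List.mem_cons.mp hx with rfl | hx
        · exact key a (hocc a (by simp)) haΦ x hb
        · exact hocc x hx
      · intro x hx
        rcases List.mem_cons.mp hx with rfl | hx
        · exact haΦ
        · exact hΦ x hx
  · intro a l hmem hnochild
    by_contra haΦ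
    obtain ⟨b, hb⟩ := htot a
    apply hnochild b
    refine ⟨by simp, ?_, List.isChain_cons_cons.mpr ⟨hb, hmem.2.2.1⟩, ?_, ?_⟩
    · rw [List.getLast?_cons_cons]; exact hmem.2.1
    · intro x hx
      rcases List.mem_cons.mp hx with rfl | hx
      · exact key a (hmem.2.2.2.1 a (by simp)) haΦ x hb
      · exact hmem.2.2.2.1 x hx
    · intro x hx
      rcases List.mem_cons.mp hx with rfl | hx
      · exact haΦ
      · exact hmem.2.2.2.2 x hx
  · rintro a ⟨l, h⟩
    exact h.2.2.2.1 a (by simp)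
end

section
/- Let S be a finite set of states with a total transition relation →, Φ a set of states, and T a possibly infinite rooted tree labeled by states such that for each internal node labeled s, the children are labeled exactly by the elements of Next(s), and each leaf is labeled by a state in Φ. Then there exists a finite rooted tree labeled by states, with the same root label, such that for each internal node labeled s the children are labeled by the elements of Next(s), and each leaf is labeled by a state that is either in Φ or equal to the label of an ancestor on its branch. -/
/-- Possibly infinite to finite trees.  If a (possibly infinite)
`Next`-branching tree has every leaf labeled in `Φ`, then there is a finite
`Next`-branching tree with the same root in which every leaf is labeled either
in `Φ` or by the label of an ancestor on its branch. -/
theorem possibly_infinite_to_finite_trees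
    {S : Type*} [Fintype S] (r : S → S → Prop)
    (htot : ∀ s, ∃ t, r s t)
    (Φ : Set S) (root : S) (T : StateTree S r root)
    (hleaf : ∀ a l, T.mem (a :: l) → (∀ b, ¬ T.mem (b :: a :: l)) → a ∈ Φ) :
    ∃ T' : StateTree S r root,
      {l | T'.mem l}.Finite ∧
      (∀ a l, T'.mem (a :: l) → (∀ b, ¬ T'.mem (b :: a :: l)) →
        a ∈ Φ ∨ a ∈ l) := by
  classical
  refine ⟨{ mem := fun l => T.mem l ∧ l.tail.Nodup
            root_mem := ⟨T.root_mem, by simp⟩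
            last_root := fun l hl => T.last_root l hl.1
            tail_mem := fun a l hl hne =>
              ⟨T.tail_mem a l hl.1 hne, by
                cases l with
                | nil => exact absurd rfl hne
                | cons x xs => exact hl.2.of_cons⟩
            branching := ?_ }, ?_, ?_⟩
  · rintro a l ⟨hm, hnd⟩ ⟨b, hb, hbnd⟩ c
    constructor
    · rintro ⟨hc, _⟩
      exact (T.branching a l hm ⟨b, hb⟩ c).mp hc
    · intro hr
      exact ⟨(T.branching a l hm ⟨b, hb⟩ c).mpr hr, hbnd⟩
  · -- finiteness: length bounded by card S + 1
    apply Set.Finite.subset (List.finite_length_le S (Fintype.card S + 1))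
    rintro l ⟨hm, hnd⟩
    simp only [Set.mem_setOf_eq]
    have := hnd.length_le_card
    cases l with
    | nil => simp
    | cons x xs => simpa using this
  · rintro a l ⟨hm, hnd⟩ hnochild
    by_cases hdup : (a :: l).Nodup
    · left
      apply hleaf a l hm
      intro b hb
      exact hnochild b ⟨hb, hdup⟩
    · right
      rcases List.nodup_cons.not.mp hdup with h
      have : ¬ (a ∉ l ∧ l.Nodup) := by simpa [List.nodup_cons] using hdup
      by_contra hmem
      exact this ⟨hmem, hnd⟩
end

section
/- Let S be a finite set with a total relation → and let P : S → Prop. Define the semantic relation EG(P, s) to hold iff there exists an infinite path s₀, s₁, ... with s₀ = s, sᵢ → sᵢ₊₁, and P(sᵢ) for all i. Define provability inductively: a sequent Γ ⊢ EG(P, s) (where Γ is a finite set of states) is derivable if either s ∈ Γ (merge rule), or P(s) holds and Γ ∪ {s} ⊢ EG(P, s′) is derivable for some s′ ∈ Next(s). Then ∅ ⊢ EG(P, s) is derivable if and only if EG(P, s) holds semantically. -/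
/-- Derivability of the sequent `Γ ⊢ EG(P, s)`: either `s` already occurs in
the context `Γ` (merge rule), or `P s` holds and the sequent
`Γ ∪ {s} ⊢ EG(P, s')` is derivable for some successor `s'` of `s`. -/
inductive EGDeriv {S : Type*} [DecidableEq S] (r : S → S → Prop)
    (P : S → Prop) : Finset S → S → Prop
  | merge {Γ : Finset S} {s : S} : s ∈ Γ → EGDeriv r P Γ s
  | step {Γ : Finset S} {s s' : S} : P s → r s s' →
      EGDeriv r P (insert s Γ) s' → EGDeriv r P Γ s

/-- A finite cycle on which `P` and `r` hold can be unfolded into an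
infinite path. -/
lemma eg_cycle_to_path {S : Type*} {r : S → S → Prop} {P : S → Prop}
    {f : ℕ → S} {n : ℕ} (hn : 0 < n) (hcyc : f n = f 0)
    (h : ∀ i < n, r (f i) (f (i + 1)) ∧ P (f i)) :
    ∃ σ : ℕ → S, σ 0 = f 0 ∧ ∀ i, r (σ i) (σ (i + 1)) ∧ P (σ i) := by
  refine ⟨fun i => f (i % n), by simp [Nat.mod_eq_of_lt hn], fun i => ?_⟩
  have hj : i % n < n := Nat.mod_lt _ hn
  have hstep : (i + 1) % n = (i % n + 1) % n := by
    conv_lhs => rw [← Nat.mod_add_div i n]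
    rw [add_right_comm, Nat.add_mul_mod_self_left]
  constructor
  · show r (f (i % n)) (f ((i + 1) % n))
    rcases lt_or_eq_of_le (Nat.succ_le_of_lt hj) with h' | h'
    · rw [hstep, Nat.mod_eq_of_lt h']
      exact (h _ hj).1
    · rw [hstep, show i % n + 1 = n from h', Nat.mod_self]
      have := (h _ hj).1
      rwa [show i % n + 1 = n from h', hcyc] at this
  · exact (h _ hj).2

/-- Soundness: a derivation yields either a finite `P`-path into the
context, or an infinite `P`-path. -/
lemma egderiv_sound {S : Type*} [DecidableEq S] {r : S → S → Prop}
    {P : S → Prop} {Γ : Finset S} {s : S} (h : EGDeriv r P Γ s) :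
    (∃ n, ∃ f : ℕ → S, f 0 = s ∧ f n ∈ Γ ∧
        ∀ i < n, r (f i) (f (i + 1)) ∧ P (f i)) ∨
    (∃ σ : ℕ → S, σ 0 = s ∧ ∀ i, r (σ i) (σ (i + 1)) ∧ P (σ i)) := by
  induction h with
  | merge hmem => exact Or.inl ⟨0, fun _ => _, rfl, hmem, by omega⟩
  | @step Γ s s' hP hr _ ih =>
    rcases ih with ⟨n, f, hf0, hfn, hf⟩ | ⟨σ, hσ0, hσ⟩
    · set g : ℕ → S := fun i => Nat.rec s (fun k _ => f k) i with hg
      have hg0 : g 0 = s := rfl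
      have hgS : ∀ k, g (k + 1) = f k := fun k => rfl
      have hgprop : ∀ i < n + 1, r (g i) (g (i + 1)) ∧ P (g i) := by
        intro i hi
        match i with
        | 0 => exact ⟨by rw [hg0, hgS, hf0]; exact hr, by rw [hg0]; exact hP⟩
        | (k + 1) =>
          rw [hgS, hgS]
          exact hf k (by omega)
      rcases Finset.mem_insert.mp hfn with heq | hmem
      · -- cycle: g (n+1) = f n = s = g 0
        rcases eg_cycle_to_path (n := n + 1) (f := g) (by omega)
            (by rw [hgS, heq, hg0]) hgprop with ⟨σ, hσ0, hσ⟩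
        exact Or.inr ⟨σ, by rw [hσ0, hg0], hσ⟩
      · exact Or.inl ⟨n + 1, g, hg0, by rw [hgS]; exact hmem, hgprop⟩
    · -- prepend s to infinite path
      set τ : ℕ → S := fun i => Nat.rec s (fun k _ => σ k) i with hτ
      refine Or.inr ⟨τ, rfl, fun i => ?_⟩
      match i with
      | 0 => exact ⟨by show r s (σ 0); rw [hσ0]; exact hr, hP⟩
      | (k + 1) => exact hσ k

/-- Completeness: an infinite `P`-path yields a derivation in any context. -/
lemma egderiv_complete {S : Type*} [Fintype S] [DecidableEq S]
    (r : S → S → Prop) (P : S → Prop) :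
    ∀ k (Γ : Finset S), Γᶜ.card ≤ k → ∀ σ : ℕ → S,
      (∀ i, r (σ i) (σ (i + 1)) ∧ P (σ i)) → EGDeriv r P Γ (σ 0) := by
  intro k
  induction k with
  | zero =>
    intro Γ hΓ σ hσ
    have : Γᶜ = ∅ := Finset.card_eq_zero.mp (Nat.le_zero.mp hΓ)
    have hmem : σ 0 ∈ Γ := by
      by_contra hc
      have h2 : σ 0 ∈ Γᶜ := Finset.mem_compl.mpr hc
      rw [this] at h2
      exact absurd h2 (Finset.notMem_empty _)
    exact EGDeriv.merge hmem
  | succ k ih =>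
    intro Γ hΓ σ hσ
    by_cases hmem : σ 0 ∈ Γ
    · exact EGDeriv.merge hmem
    · refine EGDeriv.step (hσ 0).2 (hσ 0).1 ?_
      have hcard : (insert (σ 0) Γ)ᶜ.card ≤ k := by
        rw [Finset.compl_insert, Finset.card_erase_of_mem
          (Finset.mem_compl.mpr hmem)]
        omega
      exact ih (insert (σ 0) Γ) hcard (fun i => σ (i + 1))
        (fun i => hσ (i + 1))

/-- Soundness and completeness of the `EG` proof rules:
`∅ ⊢ EG(P, s)` is derivable iff there is an infinite path from `s` on which
`P` holds everywhere. -/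
theorem EGDeriv_iff_semantics
    {S : Type*} [Fintype S] [Nonempty S] [DecidableEq S]
    (r : S → S → Prop) (htot : ∀ s, ∃ t, r s t)
    (P : S → Prop) [DecidablePred P] (s : S) :
    EGDeriv r P ∅ s ↔
      ∃ σ : ℕ → S, σ 0 = s ∧ ∀ i, r (σ i) (σ (i + 1)) ∧ P (σ i) := by
  constructor
  · intro h
    rcases egderiv_sound h with ⟨n, f, _, hfn, _⟩ | hinf
    · exact absurd hfn (Finset.notMem_empty _)
    · exact hinf
  · rintro ⟨σ, hσ0, hσ⟩
    have := egderiv_complete r P ((∅ : Finset S)ᶜ.card) ∅ le_rfl σ hσ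
    rwa [hσ0] at this
end

section
/- Let S be a finite set with a total relation → and P : S → Prop. Define the semantic relation AF(P, s) as the least relation satisfying: AF(P, s) holds if P(s) holds, or if AF(P, s′) holds for all s′ ∈ Next(s). Then AF(P, s) holds if and only if every infinite path s₀, s₁, ... starting at s (s₀ = s, sᵢ → sᵢ₊₁) contains some index j with P(sⱼ). -/
/-- `AF(P, ·)` as the least relation satisfying: `AF(P, s)` holds if `P s`
holds, or if `AF(P, s')` holds for every successor `s'` of `s`. -/
inductive AF {S : Type*} (r : S → S → Prop) (P : S → Prop) : S → Prop
  | base {s : S} : P s → AF r P s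
  | step {s : S} : (∀ s', r s s' → AF r P s') → AF r P s

/-- the inductive `AF` predicate holds at `s` iff every infinite
path starting at `s` contains a state satisfying `P`. -/
theorem AF_iff_all_paths
    {S : Type*} [Fintype S] (r : S → S → Prop)
    (htot : ∀ s, ∃ t, r s t)
    (P : S → Prop) (s : S) :
    AF r P s ↔
      ∀ σ : ℕ → S, σ 0 = s → (∀ i, r (σ i) (σ (i + 1))) →
        ∃ j, P (σ j) := by
  constructor
  · intro h
    induction h with
    | base hp => intro σ h0 _; exact ⟨0, h0 ▸ hp⟩
    | step hstep ih =>
      intro σ h0 hr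
      obtain ⟨j, hj⟩ := ih (σ 1) (h0 ▸ hr 0) (fun i => σ (i + 1)) rfl
        (fun i => hr (i + 1))
      exact ⟨j + 1, hj⟩
  · intro hpaths
    by_contra hna
    -- From ¬AF s, get ¬P s and a successor with ¬AF.
    have key : ∀ t : S, ¬ AF r P t → ¬ P t ∧ ∃ t', r t t' ∧ ¬ AF r P t' := by
      intro t ht
      constructor
      · exact fun hp => ht (AF.base hp)
      · by_contra hc
        push_neg at hc
        exact ht (AF.step fun t' hr => (hc t' hr))
    let f : {t : S // ¬ AF r P t} → {t : S // ¬ AF r P t} := fun t =>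
      ⟨(key t.1 t.2).2.choose, (key t.1 t.2).2.choose_spec.2⟩
    have hf : ∀ t : {t : S // ¬ AF r P t}, r t.1 (f t).1 := fun t =>
      (key t.1 t.2).2.choose_spec.1
    let σ' : ℕ → {t : S // ¬ AF r P t} := fun n => f^[n] ⟨s, hna⟩
    have hstep : ∀ i, σ' (i + 1) = f (σ' i) := fun i =>
      Function.iterate_succ_apply' f i _
    obtain ⟨j, hj⟩ := hpaths (fun n => (σ' n).1) rfl
      (fun i => by show r (σ' i).1 (σ' (i+1)).1; rw [hstep i]; exact hf (σ' i))
    exact (key _ (σ' j).2).1 hj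
end

section
/- Let S be a finite set with a total relation →, C a finite set of predicates on S, and P : S → Prop. Say s satisfies fair-EG (written E_C G(P, s)) iff there exists an infinite path from s on which P holds at every state and each predicate in C holds infinitely often. Then E_C G(P, s) holds iff there exists a finite path s₀,...,sₙ from s with P holding at every sᵢ, an index p < n with sₙ = sₚ, and for each f ∈ C some index q with p ≤ q ≤ n such that f(s_q). -/
/-- fair `EG`.  There is an infinite path from `s` on which `P`
holds everywhere and each predicate in `C` holds infinitely often, iff there
is a finite lasso path from `s` inside `P` such that each predicate in `C`
holds at some state of the loop. -/
theorem fair_EG_iff_fair_lasso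
    {S : Type*} [Fintype S] (r : S → S → Prop)
    (htot : ∀ s, ∃ t, r s t)
    (C : Finset (S → Prop)) (P : S → Prop) (s : S) :
    (∃ σ : ℕ → S, σ 0 = s ∧ (∀ i, r (σ i) (σ (i + 1))) ∧
        (∀ i, P (σ i)) ∧ ∀ f ∈ C, {i : ℕ | f (σ i)}.Infinite) ↔
      ∃ (sf : ℕ → S) (n : ℕ), sf 0 = s ∧
        (∀ i < n, r (sf i) (sf (i + 1))) ∧
        (∀ i ≤ n, P (sf i)) ∧
        ∃ p < n, sf n = sf p ∧
          ∀ f ∈ C, ∃ q, p ≤ q ∧ q ≤ n ∧ f (sf q) := by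
  classical
  constructor
  · rintro ⟨σ, h0, hr, hP, hC⟩
    obtain ⟨t, ht⟩ := Finite.exists_infinite_fiber σ
    rw [Set.infinite_coe_iff] at ht
    obtain ⟨p, hp⟩ := ht.nonempty
    have hp' : σ p = t := hp
    -- a common bound for witnesses of all predicates in C
    have key : ∀ D : Finset (S → Prop), (∀ f ∈ D, {i : ℕ | f (σ i)}.Infinite) →
        ∃ M, p ≤ M ∧ ∀ f ∈ D, ∃ q, p ≤ q ∧ q ≤ M ∧ f (σ q) := by
      intro D
      induction D using Finset.induction_on with
      | empty => intro _; exact ⟨p, le_refl _, by simp⟩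
      | @insert a D ha ih =>
        intro hD
        obtain ⟨M, hpM, hM⟩ := ih (fun f hf => hD f (Finset.mem_insert_of_mem hf))
        obtain ⟨q, hq, hqp⟩ := (hD a (Finset.mem_insert_self a D)).exists_gt p
        refine ⟨max M q, le_trans hpM (le_max_left _ _), ?_⟩
        intro f hf
        rcases Finset.mem_insert.1 hf with rfl | hf
        · exact ⟨q, le_of_lt hqp, le_max_right _ _, hq⟩
        · obtain ⟨q', h1, h2, h3⟩ := hM f hf
          exact ⟨q', h1, le_trans h2 (le_max_left _ _), h3⟩
    obtain ⟨M, hpM, hM⟩ := key C hC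
    obtain ⟨n, hn, hMn⟩ := ht.exists_gt M
    have hn' : σ n = t := hn
    have hpn : p < n := lt_of_le_of_lt hpM hMn
    refine ⟨σ, n, h0, fun i _ => hr i, fun i _ => hP i, p, hpn, by rw [hn', hp'],
      fun f hf => ?_⟩
    obtain ⟨q, h1, h2, h3⟩ := hM f hf
    exact ⟨q, h1, le_of_lt (lt_of_le_of_lt h2 hMn), h3⟩
  · rintro ⟨sf, n, h0, hr, hP, p, hpn, hloop, hC⟩
    set d := n - p with hd_def
    have hd : 0 < d := by omega
    have hpd : p + d = n := by omega
    set g : ℕ → ℕ := fun i => if i < n then i else p + (i - p) % d with hg_def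
    have hglt : ∀ i, g i < n := by
      intro i
      by_cases h : i < n
      · simpa [hg_def, h]
      · have := Nat.mod_lt (i - p) hd
        simp only [hg_def, if_neg h]
        omega
    have hedge : ∀ i, r (sf (g i)) (sf (g (i + 1))) := by
      intro i
      rcases lt_trichotomy (i + 1) n with h | h | h
      · have h1 : i < n := by omega
        simp only [hg_def, if_pos h1, if_pos h]
        exact hr i h1
      · have h1 : i < n := by omega
        have hgi : g i = i := by simp [hg_def, h1]
        have hgi1 : g (i + 1) = p := by
          have e : i + 1 - p = d := by omega
          simp only [hg_def, if_neg (by omega : ¬ i + 1 < n), e, Nat.mod_self,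
            Nat.add_zero]
        rw [hgi, hgi1, ← hloop, ← h]
        exact hr i h1
      · have h1 : ¬ i < n := by omega
        have h2 : ¬ i + 1 < n := by omega
        set m := (i - p) % d with hm_def
        have hm : m < d := Nat.mod_lt _ hd
        have hgi : g i = p + m := by simp [hg_def, h1, hm_def]
        have hdm : i - p = d * ((i - p) / d) + m := (Nat.div_add_mod _ _).symm
        have hstep : i + 1 - p = (m + 1) + ((i - p) / d) * d := by
          rw [Nat.mul_comm] at hdm; omega
        by_cases hmd : m + 1 < d
        · have hgi1 : g (i + 1) = p + (m + 1) := by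
            simp only [hg_def, if_neg h2, hstep, Nat.add_mul_mod_self_right,
              Nat.mod_eq_of_lt hmd]
          rw [hgi, hgi1]
          have := hr (p + m) (by omega)
          simpa [Nat.add_assoc] using this
        · have hmd' : m + 1 = d := by omega
          have hgi1 : g (i + 1) = p := by
            simp only [hg_def, if_neg h2, hstep, Nat.add_mul_mod_self_right, hmd',
              Nat.mod_self, Nat.add_zero]
          have hgi' : g i = n - 1 := by omega
          rw [hgi', hgi1, ← hloop]
          have := hr (n - 1) (by omega)
          have e : n - 1 + 1 = n := by omega
          rwa [e] at this
    refine ⟨fun i => sf (g i), ?_, hedge, fun i => hP (g i) (le_of_lt (hglt i)),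
      fun f hf => ?_⟩
    · have : g 0 = 0 := by simp [hg_def, show (0 : ℕ) < n by omega]
      show sf (g 0) = s
      rw [this, h0]
    · obtain ⟨q, hpq, hqn, hfq⟩ := hC f hf
      -- replace q = n by p
      obtain ⟨q', hpq', hq'n, hfq'⟩ : ∃ q', p ≤ q' ∧ q' < n ∧ f (sf q') := by
        rcases eq_or_lt_of_le hqn with rfl | h
        · exact ⟨p, le_refl _, hpn, by rwa [← hloop]⟩
        · exact ⟨q, hpq, h, hfq⟩
      have hvals : ∀ k : ℕ, g (q' + (k + 1) * d) = q' := by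
        intro k
        have hge : ¬ q' + (k + 1) * d < n := by
          have : d ≤ (k + 1) * d := Nat.le_mul_of_pos_left d (by omega)
          omega
        have e : q' + (k + 1) * d - p = (q' - p) + (k + 1) * d := by omega
        simp only [hg_def, if_neg hge, e, Nat.add_mul_mod_self_right,
          Nat.mod_eq_of_lt (show q' - p < d by omega)]
        omega
      have hmono : StrictMono (fun k : ℕ => q' + (k + 1) * d) := by
        apply strictMono_nat_of_lt_succ
        intro k
        have : (k + 1 + 1) * d = (k + 1) * d + d := by ring
        omega
      apply Set.infinite_of_injective_forall_mem hmono.injective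
      intro k
      simp only [Set.mem_setOf_eq, hvals k]
      exact hfq'
end

section
/- Let S be a finite set with a total relation →, and P₁, P₂ : S → Prop. Define semantic AR(P₁, P₂, s) as the existence of a possibly infinite rooted Next-branching tree with root s, P₂ at every node, and P₁ at every leaf. Define semantic ER for the negated predicates as in the paper. Then AR(P₁, P₂, s) holds if and only if every infinite path s₀, s₁, ... from s satisfies: for all j, if P₁ fails at every sᵢ with i < j, then P₂ holds at sⱼ (the standard 'release' semantics of A[φ₁ R φ₂]). -/
/-- Reversed prefix `[σ j, …, σ 0]` of a path. -/
def ARpref {S : Type*} (σ : ℕ → S) : ℕ → List S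
  | 0 => [σ 0]
  | j + 1 => σ (j + 1) :: ARpref σ j

theorem ARpref_cons {S : Type*} (σ : ℕ → S) (j : ℕ) :
    ∃ t, ARpref σ j = σ j :: t := by
  cases j <;> exact ⟨_, rfl⟩

/-- Extend a finite list to an infinite path using a successor function. -/
def ARext {S : Type*} (f : S → S) (L : List S) (d : S) : ℕ → S
  | 0 => L.getD 0 d
  | i + 1 => if i + 1 < L.length then L.getD (i + 1) d else f (ARext f L d i)

theorem ARext_eq {S : Type*} (f : S → S) (L : List S) (d : S) :
    ∀ i, i < L.length → ARext f L d i = L.getD i d := by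
  intro i hi
  cases i with
  | zero => rfl
  | succ n => simp [ARext, hi]

theorem ARext_step {S : Type*} {r : S → S → Prop} (f : S → S) (hf : ∀ x, r x (f x))
    (L : List S) (d : S) (hL : L.Chain' r) (i : ℕ) :
    r (ARext f L d i) (ARext f L d (i + 1)) := by
  by_cases h : i + 1 < L.length
  · have hi : i < L.length := Nat.lt_of_succ_lt h
    rw [ARext_eq f L d i hi, show ARext f L d (i+1) = L.getD (i+1) d by simp [ARext, h]]
    rw [List.getD_eq_getElem L d hi, List.getD_eq_getElem L d h]
    have := List.isChain_iff_getElem.mp hL i (by omega)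
    simpa [List.get_eq_getElem] using this
  · rw [show ARext f L d (i+1) = f (ARext f L d i) by simp [ARext, h]]
    exact hf _

theorem ARgetD_zero {S : Type*} {L : List S} {x : S} (h : L.head? = some x) (d : S) :
    L.getD 0 d = x := by
  cases L with
  | nil => simp at h
  | cons a t => simp at h; simp [h]

theorem ARgetD_last {S : Type*} (l : List S) (a d : S) :
    (l ++ [a]).getD l.length d = a := by
  rw [List.getD_eq_getElem _ _ (by simp)]
  rw [List.getElem_append_right le_rfl]
  simp

theorem ARgetD_mem_left {S : Type*} {l : List S} {i : ℕ} (t : List S) (d : S)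
    (h : i < l.length) : (l ++ t).getD i d ∈ l := by
  rw [List.getD_eq_getElem _ _ (by simp; omega), List.getElem_append_left h]
  exact List.getElem_mem h

/-- the tree semantics of `AR(P₁, P₂, s)` (a possibly infinite
`Next`-branching tree rooted at `s` with `P₂` at every node and `P₁` at every
leaf) coincides with the standard release semantics: on every infinite path
from `s`, `P₂` holds at every position not strictly preceded by a `P₁`
position. -/
theorem AR_tree_iff_release
    {S : Type*} [Fintype S] (r : S → S → Prop)
    (htot : ∀ s, ∃ t, r s t)
    (P₁ P₂ : S → Prop) (s : S) :
    (∃ T : StateTree S r s,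
        (∀ a l, T.mem (a :: l) → P₂ a) ∧
        (∀ a l, T.mem (a :: l) → (∀ b, ¬ T.mem (b :: a :: l)) → P₁ a)) ↔
      ∀ σ : ℕ → S, σ 0 = s → (∀ i, r (σ i) (σ (i + 1))) →
        ∀ j, (∀ i < j, ¬ P₁ (σ i)) → P₂ (σ j) := by
  constructor
  · rintro ⟨T, hP₂, hP₁⟩ σ hσ0 hstep j hj
    have key : ∀ j, (∀ i < j, ¬ P₁ (σ i)) → T.mem (ARpref σ j) := by
      intro j
      induction j with
      | zero =>
        intro _
        show T.mem [σ 0]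
        rw [hσ0]; exact T.root_mem
      | succ n ih =>
        intro hj
        have hmem : T.mem (ARpref σ n) := ih (fun i hi => hj i (Nat.lt_succ_of_lt hi))
        obtain ⟨t, ht⟩ := ARpref_cons σ n
        rw [ht] at hmem
        have hne : ∃ b, T.mem (b :: σ n :: t) := by
          by_contra h
          push_neg at h
          exact hj n (Nat.lt_succ_self n) (hP₁ (σ n) t hmem h)
        show T.mem (σ (n+1) :: ARpref σ n)
        rw [ht]
        exact (T.branching (σ n) t hmem hne (σ (n+1))).mpr (hstep n)
    obtain ⟨t, ht⟩ := ARpref_cons σ j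
    have := key j hj
    rw [ht] at this
    exact hP₂ (σ j) t this
  · intro H
    classical
    set f : S → S := fun x => (htot x).choose with hfdef
    have hf : ∀ x, r x (f x) := fun x => (htot x).choose_spec
    refine ⟨⟨fun l => l ≠ [] ∧ List.Chain' (fun x y => r y x) l ∧
        l.getLast? = some s ∧ ∀ x ∈ l.tail, ¬ P₁ x, ?_, ?_, ?_, ?_⟩, ?_, ?_⟩
    · exact ⟨by simp, List.isChain_singleton _, by simp, by simp⟩
    · exact fun l hl => hl.2.2.1
    · rintro a l ⟨-, hc, hl, htl⟩ hne
      refine ⟨hne, hc.tail, ?_, ?_⟩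
      · cases l with
        | nil => exact absurd rfl hne
        | cons b t => rw [List.getLast?_cons_cons] at hl; exact hl
      · intro x hx
        exact htl x (by cases l with
          | nil => exact absurd rfl hne
          | cons b t => exact List.mem_cons_of_mem b hx)
    · rintro a l ⟨-, hc, hl, htl⟩ ⟨b₀, -, hc₀, -, htl₀⟩ b
      constructor
      · rintro ⟨-, hcb, -, -⟩
        exact (List.isChain_cons_cons.mp hcb).1
      · intro hab
        refine ⟨by simp, List.isChain_cons_cons.mpr ⟨hab, hc⟩, ?_, ?_⟩
        · rw [List.getLast?_cons_cons]; exact hl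
        · intro x hx
          rcases List.mem_cons.mp hx with rfl | hx
          · exact htl₀ x (List.mem_cons_self)
          · exact htl x hx
    · -- every node satisfies P₂
      rintro a l ⟨-, hc, hl, htl⟩
      have hLchain : ((a :: l).reverse).Chain' r := by
        exact List.isChain_reverse.mpr hc
      set σ : ℕ → S := ARext f ((a :: l).reverse) s with hσdef
      have hlen : ((a :: l).reverse).length = l.length + 1 := by simp
      have hσ0 : σ 0 = s := by
        rw [hσdef, ARext_eq f _ s 0 (by omega)]
        exact ARgetD_zero (by rw [List.head?_reverse]; exact hl) s
      have hσstep : ∀ i, r (σ i) (σ (i + 1)) :=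
        fun i => ARext_step f hf _ s hLchain i
      have hlast : σ l.length = a := by
        rw [hσdef, ARext_eq f _ s _ (by omega), List.reverse_cons]
        simpa using ARgetD_last l.reverse a s
      have hpre : ∀ i < l.length, σ i ∈ l := by
        intro i hi
        rw [hσdef, ARext_eq f _ s _ (by omega), List.reverse_cons]
        have := ARgetD_mem_left [a] s (by simpa using hi : i < l.reverse.length)
        rwa [List.mem_reverse] at this
      have := H σ hσ0 hσstep l.length (fun i hi => htl (σ i) (hpre i hi))
      rwa [hlast] at this
    · -- leaves satisfy P₁
      rintro a l ⟨-, hc, hl, htl⟩ hleaf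
      by_contra hP1a
      apply hleaf (f a)
      refine ⟨by simp, List.isChain_cons_cons.mpr ⟨hf a, hc⟩, ?_, ?_⟩
      · rw [List.getLast?_cons_cons]; exact hl
      · intro x hx
        rcases List.mem_cons.mp hx with rfl | hx
        · exact hP1a
        · exact htl x hx
end
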